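/- If Cay(G,S) is a normal Cayley graph and χ is an irreducible character of G, then χ (viewed as an element of the space of class functions) is an eigenvector of the adjacency operator restricted to class functions, with eigenvalue (1/χ(1))·Σ_{g∈S} χ(g). -/

import Mathlib

open Finset

theorem stmt_12 {G : Type} [Group G] [Fintype G] [DecidableEq G]
    (S : Finset G) (h1 : (1 : G) ∉ S) (hinv : ∀ g ∈ S, g⁻¹ ∈ S)
    (hconj : ∀ g ∈ S, ∀ x : G, x * g * x⁻¹ ∈ S)
    (V : FDRep ℂ G) (hirr : CategoryTheory.Simple V) :
    ∀ x : G, ∑ g ∈ S, V.character (g * x)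
      = ((∑ g ∈ S, V.character g) / V.character 1) * V.character x := by
  classical
  set T : Module.End ℂ ↑V := ∑ g ∈ S, (V.ρ g : Module.End ℂ ↑V) with hT
  have hcomm : ∀ y : G, T * V.ρ y = V.ρ y * T := by
    intro y
    have hre : (∑ g ∈ S, (V.ρ (y⁻¹ * g * y) : Module.End ℂ ↑V))
        = ∑ g ∈ S, (V.ρ g : Module.End ℂ ↑V) :=
      Finset.sum_nbij' (fun g => y⁻¹ * g * y) (fun g => y * g * y⁻¹)
        (fun g hg => by simpa using hconj g hg y⁻¹)
        (fun g hg => hconj g hg y)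
        (fun g _ => by group) (fun g _ => by group) (fun g _ => rfl)
    rw [hT, Finset.sum_mul]
    conv_rhs => rw [← hre]
    rw [Finset.mul_sum]
    refine Finset.sum_congr rfl fun g hg => ?_
    rw [← map_mul, ← map_mul]
    congr 1
    group
  let φ : V ⟶ V := ⟨CategoryTheory.InducedCategory.homMk (ModuleCat.ofHom T), fun y => FGModuleCat.hom_ext (by exact hcomm y)⟩
  obtain ⟨c, hc⟩ := CategoryTheory.endomorphism_simple_eq_smul_id ℂ φ
  have hTc : T = c • (1 : Module.End ℂ ↑V) := by
    have h := congrArg (fun f : V ⟶ V => f.hom.hom.hom) hc.symm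
    exact h
  have htr : ∀ x : G, ∑ g ∈ S, V.character (g * x) = c * V.character x := by
    intro x
    have step : ∑ g ∈ S, V.character (g * x)
        = LinearMap.trace ℂ ↑V (T * V.ρ x) := by
      rw [hT, Finset.sum_mul, map_sum]
      exact Finset.sum_congr rfl fun g hg => by simp [FDRep.character, map_mul]
    rw [step, hTc, smul_mul_assoc, one_mul, map_smul, smul_eq_mul]
    rfl
  have hdim : V.character 1 ≠ 0 := by
    rw [FDRep.char_one]
    have hpos : Module.finrank ℂ ↑V ≠ 0 := by
      intro hz
      apply CategoryTheory.id_nonzero V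
      apply Action.Hom.ext
      apply FGModuleCat.hom_ext
      apply LinearMap.ext
      intro v
      exact @Subsingleton.elim _ (Module.finrank_zero_iff.mp hz) _ _
    exact_mod_cast Nat.cast_ne_zero.mpr hpos
  have hsum : ∑ g ∈ S, V.character g = c * V.character 1 := by
    simpa using htr 1
  intro x
  rw [htr x, hsum, mul_div_assoc, div_self hdim, mul_one]
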